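/- Generalized helicity conservation law (pointwise form): suppose u, K, L are C¹ vector fields and G a C¹ scalar field on ℝ × ℝ³ such that (i) div L = 0, (ii) L satisfies the Helmholtz equation ∂L/∂t + (∂L/∂x)u + L div u − (∂u/∂x)L = 0, and (iii) K satisfies DK/Dt + (∂u/∂x)ᵀK + ∇(G − |u|²/2) = 0. Then ∂/∂t (KᵀL) + div{ (KᵀL) u + (G − |u|²/2) L } = 0. -/

import Mathlib

open Matrix

noncomputable section

abbrev V3 := Fin 3 → ℝ

/-- spatial partial derivative in direction `i` -/
def pd (i : Fin 3) (f : V3 → ℝ) (x : V3) : ℝ := fderiv ℝ f x (Pi.single i 1)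

/-- gradient of a scalar field -/
def grad (f : V3 → ℝ) (x : V3) : V3 := fun i => pd i f x

/-- divergence of a vector field -/
def vdiv (v : V3 → V3) (x : V3) : ℝ := ∑ i, pd i (fun y => v y i) x

/-- spatial Jacobian matrix ∂v/∂x -/
def jac (v : V3 → V3) (x : V3) : Matrix (Fin 3) (Fin 3) ℝ := fun i j => pd j (fun y => v y i) x

/-- curl of a vector field -/
def curl (v : V3 → V3) (x : V3) : V3 :=
  ![pd 1 (fun y => v y 2) x - pd 2 (fun y => v y 1) x,
    pd 2 (fun y => v y 0) x - pd 0 (fun y => v y 2) x,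
    pd 0 (fun y => v y 1) x - pd 1 (fun y => v y 0) x]

/-- cross product in ℝ³ -/
def cross (a b : V3) : V3 :=
  ![a 1 * b 2 - a 2 * b 1, a 2 * b 0 - a 0 * b 2, a 0 * b 1 - a 1 * b 0]

/-- partial time derivative of a scalar field -/
def pt (f : ℝ → V3 → ℝ) (t : ℝ) (x : V3) : ℝ := deriv (fun s => f s x) t

/-- partial time derivative of a vector field -/
def ptV (f : ℝ → V3 → V3) (t : ℝ) (x : V3) : V3 := fun i => pt (fun t x => f t x i) t x

/-- material derivative D/Dt = ∂/∂t + uᵀ∇ of a scalar field -/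
def Dmat (u : ℝ → V3 → V3) (f : ℝ → V3 → ℝ) (t : ℝ) (x : V3) : ℝ :=
  pt f t x + ∑ i, u t x i * pd i (f t) x

/-- material derivative of a vector field, componentwise -/
def DmatV (u f : ℝ → V3 → V3) (t : ℝ) (x : V3) : V3 :=
  fun i => Dmat u (fun t x => f t x i) t x

lemma pd_add {f g : V3 → ℝ} {x : V3} (i : Fin 3) (hf : DifferentiableAt ℝ f x)
    (hg : DifferentiableAt ℝ g x) :
    pd i (fun y => f y + g y) x = pd i f x + pd i g x := by
  unfold pd; rw [fderiv_fun_add hf hg]; rfl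

lemma pd_mul {f g : V3 → ℝ} {x : V3} (i : Fin 3) (hf : DifferentiableAt ℝ f x)
    (hg : DifferentiableAt ℝ g x) :
    pd i (fun y => f y * g y) x = f x * pd i g x + g x * pd i f x := by
  unfold pd; rw [fderiv_fun_mul hf hg]; rfl

lemma pd_sub {f g : V3 → ℝ} {x : V3} (i : Fin 3) (hf : DifferentiableAt ℝ f x)
    (hg : DifferentiableAt ℝ g x) :
    pd i (fun y => f y - g y) x = pd i f x - pd i g x := by
  unfold pd; rw [fderiv_fun_sub hf hg]; rfl

lemma pd_div_const {f : V3 → ℝ} {x : V3} (i : Fin 3) (hf : DifferentiableAt ℝ f x) (c : ℝ) :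
    pd i (fun y => f y / c) x = pd i f x / c := by
  unfold pd
  simp only [div_eq_inv_mul]
  rw [fderiv_const_mul hf]
  rfl

lemma pd_sum {f : Fin 3 → V3 → ℝ} {x : V3} (i : Fin 3)
    (hf : ∀ j, DifferentiableAt ℝ (f j) x) :
    pd i (fun y => ∑ j, f j y) x = ∑ j, pd i (f j) x := by
  unfold pd; rw [fderiv_fun_sum (fun j _ => hf j)]; rfl

lemma diffV_x {F : ℝ → V3 → V3} (hF : ContDiff ℝ 1 (Function.uncurry F)) (t : ℝ) (x : V3)
    (i : Fin 3) : DifferentiableAt ℝ (fun y => F t y i) x := by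
  have h1 : Differentiable ℝ (Function.uncurry F) := hF.differentiable one_ne_zero
  have h2 : Differentiable ℝ (fun y : V3 => F t y) :=
    h1.comp ((differentiable_const t).prodMk differentiable_id)
  exact (differentiable_pi.mp h2 i).differentiableAt

lemma diffV_t {F : ℝ → V3 → V3} (hF : ContDiff ℝ 1 (Function.uncurry F)) (t : ℝ) (x : V3)
    (i : Fin 3) : DifferentiableAt ℝ (fun s => F s x i) t := by
  have h1 : Differentiable ℝ (Function.uncurry F) := hF.differentiable one_ne_zero
  have h2 : Differentiable ℝ (fun s : ℝ => F s x) :=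
    h1.comp (differentiable_id.prodMk (differentiable_const x))
  exact (differentiable_pi.mp h2 i).differentiableAt

lemma diffS_x {G : ℝ → V3 → ℝ} (hG : ContDiff ℝ 1 (Function.uncurry G)) (t : ℝ) (x : V3) :
    DifferentiableAt ℝ (fun y => G t y) x := by
  have h1 : Differentiable ℝ (Function.uncurry G) := hG.differentiable one_ne_zero
  exact (h1.comp ((differentiable_const t).prodMk differentiable_id)).differentiableAt

/-- Generalized helicity conservation law, pointwise form. -/
theorem generalized_helicity_conservation (u K L : ℝ → V3 → V3) (G : ℝ → V3 → ℝ)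
    (hu : ContDiff ℝ 1 (Function.uncurry u))
    (hK : ContDiff ℝ 1 (Function.uncurry K))
    (hL : ContDiff ℝ 1 (Function.uncurry L))
    (hG : ContDiff ℝ 1 (Function.uncurry G))
    (hdivL : ∀ t x, vdiv (L t) x = 0)
    (hHelmholtz : ∀ t x, ptV L t x + jac (L t) x *ᵥ u t x
        + vdiv (u t) x • L t x - jac (u t) x *ᵥ L t x = 0)
    (hKeq : ∀ t x, DmatV u K t x + (jac (u t) x)ᵀ *ᵥ K t x
        + grad (fun y => G t y - (u t y ⬝ᵥ u t y) / 2) x = 0)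
    (t : ℝ) (x : V3) :
    pt (fun s y => K s y ⬝ᵥ L s y) t x
      + vdiv (fun y => (K t y ⬝ᵥ L t y) • u t y
          + (G t y - (u t y ⬝ᵥ u t y) / 2) • L t y) x = 0 := by

  -- differentiability atoms
  have dKx : ∀ i, DifferentiableAt ℝ (fun y => K t y i) x := diffV_x hK t x
  have dLx : ∀ i, DifferentiableAt ℝ (fun y => L t y i) x := diffV_x hL t x
  have dux : ∀ i, DifferentiableAt ℝ (fun y => u t y i) x := diffV_x hu t x
  have dGx : DifferentiableAt ℝ (fun y => G t y) x := diffS_x hG t x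
  have dKt : ∀ i, DifferentiableAt ℝ (fun s => K s x i) t := diffV_t hK t x
  have dLt : ∀ i, DifferentiableAt ℝ (fun s => L s x i) t := diffV_t hL t x
  have dKL : DifferentiableAt ℝ (fun y => ∑ i, K t y i * L t y i) x :=
    DifferentiableAt.fun_sum (fun i _ => (dKx i).mul (dLx i))
  have duu : DifferentiableAt ℝ (fun y => ∑ i, u t y i * u t y i) x :=
    DifferentiableAt.fun_sum (fun i _ => (dux i).mul (dux i))
  have duu2 : DifferentiableAt ℝ (fun y => (∑ k, u t y k * u t y k) / 2) x := by
    simp only [div_eq_inv_mul]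
    exact duu.const_mul _
  have dH : DifferentiableAt ℝ (fun y => G t y - (∑ k, u t y k * u t y k) / 2) x :=
    dGx.sub duu2
  -- expansion of pd of the pressure-type scalar
  have epdH : ∀ j : Fin 3, pd j (fun y => G t y - (∑ k, u t y k * u t y k) / 2) x
      = pd j (fun y => G t y) x
        - (∑ k, (u t x k * pd j (fun y => u t y k) x + u t x k * pd j (fun y => u t y k) x)) / 2 := by
    intro j
    rw [pd_sub j dGx duu2, pd_div_const j duu, pd_sum j (fun k => (dux k).fun_mul (dux k))]
    congr 2
    exact Finset.sum_congr rfl fun k _ => pd_mul j (dux k) (dux k)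
  have epdKL : ∀ j : Fin 3, pd j (fun y => ∑ i, K t y i * L t y i) x
      = ∑ i, (K t x i * pd j (fun y => L t y i) x + L t x i * pd j (fun y => K t y i) x) := by
    intro j
    rw [pd_sum j (fun i => (dKx i).fun_mul (dLx i))]
    exact Finset.sum_congr rfl fun i _ => pd_mul j (dKx i) (dLx i)
  -- time derivative
  have e1 : pt (fun s y => K s y ⬝ᵥ L s y) t x
      = ∑ i, (pt (fun t x => K t x i) t x * L t x i + K t x i * pt (fun t x => L t x i) t x) := by
    show deriv (fun s => K s x ⬝ᵥ L s x) t = _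
    simp only [dotProduct]
    rw [deriv_fun_sum (fun i _ => (dKt i).fun_mul (dLt i))]
    exact Finset.sum_congr rfl fun i _ => deriv_fun_mul (dKt i) (dLt i)
  -- divergence
  have e2 : vdiv (fun y => (K t y ⬝ᵥ L t y) • u t y
          + (G t y - (u t y ⬝ᵥ u t y) / 2) • L t y) x
      = ∑ j, ((∑ i, K t x i * L t x i) * pd j (fun y => u t y j) x
          + u t x j * (∑ i, (K t x i * pd j (fun y => L t y i) x
              + L t x i * pd j (fun y => K t y i) x))
          + ((G t x - (∑ k, u t x k * u t x k) / 2) * pd j (fun y => L t y j) x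
          + L t x j * (pd j (fun y => G t y) x
              - (∑ k, (u t x k * pd j (fun y => u t y k) x
                  + u t x k * pd j (fun y => u t y k) x)) / 2))) := by
    unfold vdiv
    refine Finset.sum_congr rfl fun j _ => ?_
    have hfun : (fun y => ((K t y ⬝ᵥ L t y) • u t y
          + (G t y - (u t y ⬝ᵥ u t y) / 2) • L t y) j)
        = fun y => (∑ i, K t y i * L t y i) * u t y j
            + (G t y - (∑ k, u t y k * u t y k) / 2) * L t y j := by
      funext y
      simp [dotProduct]
    rw [hfun, pd_add j (dKL.fun_mul (dux j)) (dH.fun_mul (dLx j)), pd_mul j dKL (dux j),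
      pd_mul j dH (dLx j), epdKL j, epdH j]
  rw [e1, e2]
  -- componentwise hypotheses
  have hfun2 : (fun y => G t y - (u t y ⬝ᵥ u t y) / 2)
      = fun y => G t y - (∑ k, u t y k * u t y k) / 2 := by
    funext y; simp [dotProduct]
  have hk0 := congrFun (hKeq t x) 0
  have hk1 := congrFun (hKeq t x) 1
  have hk2 := congrFun (hKeq t x) 2
  have hh0 := congrFun (hHelmholtz t x) 0
  have hh1 := congrFun (hHelmholtz t x) 1
  have hh2 := congrFun (hHelmholtz t x) 2
  have hdiv := hdivL t x
  simp only [hfun2, Pi.add_apply, Pi.sub_apply, Pi.smul_apply, smul_eq_mul, Pi.zero_apply,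
    ptV, DmatV, Dmat, mulVec, dotProduct, Matrix.transpose_apply, jac, grad, vdiv]
    at hk0 hk1 hk2 hh0 hh1 hh2 hdiv
  rw [epdH 0] at hk0
  rw [epdH 1] at hk1
  rw [epdH 2] at hk2
  simp only [Fin.sum_univ_three] at hk0 hk1 hk2 hh0 hh1 hh2 hdiv ⊢
  linear_combination (L t x 0) * hk0 + (L t x 1) * hk1 + (L t x 2) * hk2
    + (K t x 0) * hh0 + (K t x 1) * hh1 + (K t x 2) * hh2
    + (G t x - (u t x 0 * u t x 0 + u t x 1 * u t x 1 + u t x 2 * u t x 2) / 2) * hdiv
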